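/- Fix n ≥ 2 and k ≥ 1. The proportion a_p of pairs (x, y) ∈ G_p × G_p such that the reduced word of x has length at least k with k-th letter a_1^{−1}, and the reduced word of y has length at least k+1 with first k+1 letters equal to the first k letters of the reduced word of x followed by a_2, is monotone nondecreasing in p: a_p ≤ a_{p+1} for all p ≥ 1. -/

import Mathlib

open List

set_option linter.unusedSectionVars false
variable {α : Type*} [DecidableEq α] [Fintype α]

def RelR (a b : α × Bool) : Prop := ¬(a.1 = b.1 ∧ a.2 = !b.2)

instance : DecidableRel (RelR (α := α)) := fun a b => by unfold RelR; infer_instance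

lemma relR_symm {a b : α × Bool} : RelR a b ↔ RelR b a := by
  unfold RelR
  constructor <;> (intro h hc; exact h ⟨hc.1.symm, by simp [hc.2]⟩)

lemma reduce_eq_self_iff (l : List (α × Bool)) :
    FreeGroup.reduce l = l ↔ l.Chain' RelR := by
  induction l with
  | nil => simp; exact List.isChain_nil
  | cons x l ih =>
    constructor
    · intro h
      rw [FreeGroup.reduce.cons] at h
      rcases hr : FreeGroup.reduce l with _ | ⟨y, t⟩
      · rw [hr] at h
        simp at h
        rw [h]
        exact isChain_singleton x
      · rw [hr] at h
        dsimp at h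
        split_ifs at h with hc
        · exfalso
          have h1 : (FreeGroup.reduce l).length ≤ l.length :=
            (FreeGroup.reduce.red (L := l)).length_le
          have h2 := congrArg List.length h
          rw [hr] at h1
          simp at h1 h2
          omega
        · have hl : l = y :: t := by
            injection h with h1 h2
            exact h2.symm
          have : FreeGroup.reduce l = l := by rw [hr, hl]
          have hch := ih.mp this
          rw [hl]
          exact isChain_cons_cons.mpr ⟨hc, by rw [← hl]; exact hch⟩
    · intro h
      rcases hl : l with _ | ⟨y, t⟩
      · rfl
      · rw [hl] at h ih
        have hch := (isChain_cons_cons.mp h).2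
        have hr : FreeGroup.reduce (y :: t) = y :: t := ih.mpr hch
        rw [FreeGroup.reduce.cons, hr]
        dsimp
        rw [if_neg (isChain_cons_cons.mp h).1]

/-- Letters that may legally follow the list `l` keeping it reduced. -/
def nxt (l : List (α × Bool)) : Finset (α × Bool) :=
  match l.getLast? with
  | none => Finset.univ
  | some c => Finset.univ.erase (c.1, !c.2)

lemma mem_nxt_nil : ∀ x, x ∈ nxt ([] : List (α × Bool)) := by
  intro x; simp [nxt]

lemma nxt_concat (l : List (α × Bool)) (c : α × Bool) :
    nxt (l ++ [c]) = Finset.univ.erase (c.1, !c.2) := by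
  simp [nxt]

lemma mem_nxt_iff (l : List (α × Bool)) (hl : l ≠ []) (x : α × Bool) :
    x ∈ nxt l ↔ ∀ c ∈ l.getLast?, RelR c x := by
  rcases (l.eq_nil_or_concat').symm with ⟨l', c, rfl⟩ | h
  · rw [nxt_concat]
    simp only [getLast?_concat, Option.mem_some_iff]
    constructor
    · intro hx d hd
      subst hd
      simp only [Finset.mem_erase, Finset.mem_univ, and_true] at hx
      intro hc
      apply hx
      have : x.2 = !c.2 := by simp [hc.2]
      exact Prod.ext hc.1.symm (by simp [this])
    · intro h
      simp only [Finset.mem_erase, Finset.mem_univ, and_true]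
      intro hx
      exact h c rfl ⟨by rw [hx], by rw [hx]; simp⟩
  · exact absurd h hl

lemma card_nxt (l : List (α × Bool)) (hl : l ≠ []) :
    (nxt l).card = 2 * Fintype.card α - 1 := by
  rcases (l.eq_nil_or_concat').symm with ⟨l', c, rfl⟩ | h
  · rw [nxt_concat, Finset.card_erase_of_mem (Finset.mem_univ _)]
    simp [Fintype.card_prod, mul_comm]
  · exact absurd h hl

/-- Reduced words of length `u.length + t` extending the reduced word `u`. -/
def exts (u : List (α × Bool)) : ℕ → Finset (List (α × Bool))
  | 0 => {u}
  | t + 1 => (exts u t).biUnion fun l => (nxt l).image fun x => l ++ [x]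

lemma length_of_mem_exts {u : List (α × Bool)} {t : ℕ} {l : List (α × Bool)}
    (h : l ∈ exts u t) : l.length = u.length + t := by
  induction t generalizing l with
  | zero => simp only [exts, Finset.mem_singleton] at h; simp [h]
  | succ t ih =>
    simp only [exts, Finset.mem_biUnion, Finset.mem_image] at h
    obtain ⟨l', hl', x, _, rfl⟩ := h
    simp [ih hl', Nat.add_assoc]

lemma mem_exts_iff {u : List (α × Bool)} (hu : u.Chain' RelR) (t : ℕ)
    (l : List (α × Bool)) :
    l ∈ exts u t ↔ l.Chain' RelR ∧ l.length = u.length + t ∧ l.take u.length = u := by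
  induction t generalizing l with
  | zero =>
    simp only [exts, Finset.mem_singleton]
    constructor
    · rintro rfl; exact ⟨hu, by simp, by simp⟩
    · rintro ⟨-, h1, h2⟩
      rw [← h2]
      exact (List.take_of_length_le (by omega)).symm
  | succ t ih =>
    simp only [exts, Finset.mem_biUnion, Finset.mem_image]
    constructor
    · rintro ⟨l', hl', x, hx, rfl⟩
      obtain ⟨hc', hlen', htake'⟩ := (ih _).mp hl'
      refine ⟨?_, by simp [hlen', Nat.add_assoc], ?_⟩
      · rcases eq_or_ne l' [] with rfl | hne
        · exact isChain_singleton x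
        · refine List.isChain_append.mpr ⟨hc', isChain_singleton x, ?_⟩
          intro c hc y hy
          simp only [head?_cons, Option.mem_some_iff] at hy
          subst hy
          exact (mem_nxt_iff l' hne x).mp hx c hc
      · rw [List.take_append_of_le_length (by omega), htake']
    · rintro ⟨hc, hlen, htake⟩
      have hlne : l ≠ [] := by intro h; subst h; simp at hlen
      obtain ⟨l', c, rfl⟩ := l.eq_nil_or_concat'.resolve_left hlne
      have hlen' : l'.length = u.length + t := by
        simp only [length_append, length_cons, length_nil] at hlen; omega
      refine ⟨l', ?_, c, ?_, rfl⟩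
      · apply (ih _).mpr
        refine ⟨(List.isChain_append.mp hc).1, hlen', ?_⟩
        rw [List.take_append_of_le_length (by omega)] at htake
        exact htake
      · rcases eq_or_ne l' [] with rfl | hne
        · exact mem_nxt_nil c
        · rw [mem_nxt_iff l' hne c]
          intro d hd
          exact (List.isChain_append.mp hc).2.2 d hd c (by simp)

lemma card_exts_succ {u : List (α × Bool)} (t : ℕ) (h : 1 ≤ u.length + t) :
    (exts u (t + 1)).card = (2 * Fintype.card α - 1) * (exts u t).card := by
  have hdisj : ∀ l1 ∈ exts u t, ∀ l2 ∈ exts u t, l1 ≠ l2 →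
      Disjoint (Finset.image (fun x => l1 ++ [x]) (nxt l1))
        (Finset.image (fun x => l2 ++ [x]) (nxt l2)) := by
    intro l1 h1 l2 h2 hne
    simp only [Finset.disjoint_left, Finset.mem_image]
    rintro a ⟨x, -, rfl⟩ ⟨y, -, hy⟩
    apply hne
    have e1 := length_of_mem_exts h1
    have e2 := length_of_mem_exts h2
    have := congrArg (List.take (u.length + t)) hy
    rw [take_append_of_le_length (by omega), List.take_of_length_le (by omega),
      take_append_of_le_length (by omega), List.take_of_length_le (by omega)] at this
    exact this.symm
  have himg : ∀ l ∈ exts u t,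
      (Finset.image (fun x => l ++ [x]) (nxt l)).card = 2 * Fintype.card α - 1 := by
    intro l hl
    rw [Finset.card_image_of_injective _ (fun x y hxy => by simpa using hxy), card_nxt]
    intro hnil
    have := length_of_mem_exts hl
    rw [hnil] at this
    simp at this
    omega
  rw [exts, Finset.card_biUnion hdisj, Finset.sum_congr rfl himg, Finset.sum_const,
    smul_eq_mul, mul_comm]

lemma card_exts {u : List (α × Bool)} (hu : u ≠ []) (t : ℕ) :
    (exts u t).card = (2 * Fintype.card α - 1) ^ t := by
  induction t with
  | zero => simp [exts]
  | succ t ih =>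
    rw [card_exts_succ t (by cases u <;> simp_all; omega), ih, pow_succ, mul_comm]

lemma card_exts_nil (t : ℕ) :
    (exts ([] : List (α × Bool)) (t + 1)).card
      = 2 * Fintype.card α * (2 * Fintype.card α - 1) ^ t := by
  induction t with
  | zero =>
    rw [show (exts ([] : List (α × Bool)) 1)
        = ({[]} : Finset (List (α × Bool))).biUnion
            (fun l => (nxt l).image fun x => l ++ [x]) from rfl,
      Finset.singleton_biUnion,
      Finset.card_image_of_injective _ (fun x y hxy => by simpa using hxy)]
    simp [nxt, Fintype.card_prod, mul_comm]
  | succ t ih =>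
    rw [card_exts_succ (t + 1) (by omega), ih, pow_succ]
    ring

/-- All reduced words over `α × Bool` of length at most `p`. -/
def allLe (α : Type*) [DecidableEq α] [Fintype α] (p : ℕ) : Finset (List (α × Bool)) :=
  (Finset.range (p + 1)).biUnion fun m => exts [] m

lemma mem_allLe_iff (p : ℕ) (l : List (α × Bool)) :
    l ∈ allLe α p ↔ l.Chain' RelR ∧ l.length ≤ p := by
  simp only [allLe, Finset.mem_biUnion, Finset.mem_range]
  constructor
  · rintro ⟨m, hm, hl⟩
    obtain ⟨h1, h2, -⟩ := (mem_exts_iff List.isChain_nil m l).mp hl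
    exact ⟨h1, by simp only [List.length_nil] at h2; omega⟩
  · rintro ⟨h1, h2⟩
    refine ⟨l.length, ?_, (mem_exts_iff List.isChain_nil _ l).mpr ⟨h1, by simp, by simp⟩⟩
    omega

lemma card_allLe (p : ℕ) :
    (allLe α p).card = ∑ m ∈ Finset.range (p + 1), (exts ([] : List (α × Bool)) m).card := by
  rw [allLe, Finset.card_biUnion]
  intro m hm m' hm' hne
  simp only [Finset.disjoint_left]
  intro l hl hl'
  have := length_of_mem_exts hl
  have := length_of_mem_exts hl'
  omega

lemma flip_relR : flip (RelR (α := α)) = RelR := by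
  funext a b
  simp only [flip]
  rw [eq_iff_iff]
  exact relR_symm

lemma chain'_reverse_relR (l : List (α × Bool)) :
    l.reverse.Chain' RelR ↔ l.Chain' RelR := by
  rw [show l.reverse.Chain' RelR ↔ l.Chain' (flip RelR) from List.isChain_reverse, flip_relR]

/-- Transfer a set of elements of the free group (specified by a predicate on their
reduced words) to a finset of reduced words. -/
lemma ncard_toWord_set (F : Finset (List (α × Bool))) (Q : List (α × Bool) → Prop)
    (hF : ∀ l, l ∈ F ↔ l.Chain' RelR ∧ Q l) :
    {w : FreeGroup α | Q w.toWord}.ncard = F.card := by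
  have himg : FreeGroup.toWord '' {w : FreeGroup α | Q w.toWord} = ↑F := by
    ext l
    simp only [Set.mem_image, Set.mem_setOf_eq, Finset.mem_coe, hF]
    constructor
    · rintro ⟨w, hw, rfl⟩
      exact ⟨(reduce_eq_self_iff _).mp (FreeGroup.reduce_toWord w), hw⟩
    · rintro ⟨hc, hq⟩
      have h1 : (FreeGroup.mk l).toWord = l := by
        rw [FreeGroup.toWord_mk, (reduce_eq_self_iff _).mpr hc]
      exact ⟨FreeGroup.mk l, by rw [h1]; exact hq, h1⟩
  calc {w : FreeGroup α | Q w.toWord}.ncard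
      = (FreeGroup.toWord '' {w : FreeGroup α | Q w.toWord}).ncard :=
        (Set.ncard_image_of_injective _ FreeGroup.toWord_injective).symm
    _ = F.card := by rw [himg, Set.ncard_coe_finset]

/-- Pair version of `ncard_toWord_set`. -/
lemma ncard_toWord_set2 (F : Finset (List (α × Bool) × List (α × Bool)))
    (Q : List (α × Bool) → List (α × Bool) → Prop)
    (hF : ∀ x y, (x, y) ∈ F ↔ x.Chain' RelR ∧ y.Chain' RelR ∧ Q x y) :
    {w : FreeGroup α × FreeGroup α | Q w.1.toWord w.2.toWord}.ncard = F.card := by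
  have hinj : Function.Injective
      (fun w : FreeGroup α × FreeGroup α => (w.1.toWord, w.2.toWord)) := by
    intro a b hab
    simp only [Prod.mk.injEq] at hab
    exact Prod.ext (FreeGroup.toWord_injective hab.1) (FreeGroup.toWord_injective hab.2)
  have himg : (fun w : FreeGroup α × FreeGroup α => (w.1.toWord, w.2.toWord)) ''
      {w | Q w.1.toWord w.2.toWord} = ↑F := by
    ext ⟨x, y⟩
    simp only [Set.mem_image, Set.mem_setOf_eq, Finset.mem_coe, hF, Prod.mk.injEq,
      Prod.exists]
    constructor
    · rintro ⟨a, b, hab, h1, h2⟩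
      subst h1; subst h2
      exact ⟨(reduce_eq_self_iff _).mp (FreeGroup.reduce_toWord a),
        (reduce_eq_self_iff _).mp (FreeGroup.reduce_toWord b), hab⟩
    · rintro ⟨hcx, hcy, hq⟩
      have h1 : (FreeGroup.mk x).toWord = x := by
        rw [FreeGroup.toWord_mk, (reduce_eq_self_iff _).mpr hcx]
      have h2 : (FreeGroup.mk y).toWord = y := by
        rw [FreeGroup.toWord_mk, (reduce_eq_self_iff _).mpr hcy]
      exact ⟨FreeGroup.mk x, FreeGroup.mk y, by rw [h1, h2]; exact hq, h1, h2⟩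
  calc {w : FreeGroup α × FreeGroup α | Q w.1.toWord w.2.toWord}.ncard
      = ((fun w : FreeGroup α × FreeGroup α => (w.1.toWord, w.2.toWord)) ''
          {w | Q w.1.toWord w.2.toWord}).ncard := (Set.ncard_image_of_injective _ hinj).symm
    _ = F.card := by rw [himg, Set.ncard_coe_finset]

/-- Reduced words of length `k` ending with the letter `g`. -/
def Ufin (g : α × Bool) (k : ℕ) : Finset (List (α × Bool)) :=
  (exts [g] (k - 1)).image List.reverse

lemma mem_Ufin_iff {g : α × Bool} {k : ℕ} (hk : 1 ≤ k) (v : List (α × Bool)) :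
    v ∈ Ufin g k ↔ v.Chain' RelR ∧ v.length = k ∧ v.getLast? = some g := by
  simp only [Ufin, Finset.mem_image]
  constructor
  · rintro ⟨l, hl, rfl⟩
    obtain ⟨h1, h2, h3⟩ := (mem_exts_iff (List.isChain_singleton g) _ l).mp hl
    refine ⟨(chain'_reverse_relR l).mpr h1, by simp [h2]; omega, ?_⟩
    rw [← List.head?_reverse, List.reverse_reverse]
    rw [List.length_singleton] at h3
    rcases l with _ | ⟨a, t⟩
    · simp at h2; omega
    · simp only [List.take_succ_cons, List.take_zero] at h3
      injection h3 with h3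
      simp [h3]
  · rintro ⟨h1, h2, h3⟩
    refine ⟨v.reverse, (mem_exts_iff (List.isChain_singleton g) _ v.reverse).mpr
      ⟨(chain'_reverse_relR _).mp (by rwa [List.reverse_reverse]), by simp [h2]; omega, ?_⟩,
      v.reverse_reverse⟩
    rw [List.length_singleton]
    rcases hv : v.reverse with _ | ⟨a, t⟩
    · simp at hv; subst hv; simp at h2; omega
    · have : v.reverse.head? = some a := by rw [hv]; rfl
      rw [List.head?_reverse, h3] at this
      injection this with this
      simp [this]

lemma card_Ufin (g : α × Bool) (k : ℕ) :
    (Ufin g k).card = (2 * Fintype.card α - 1) ^ (k - 1) := by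
  rw [Ufin, Finset.card_image_of_injective _ List.reverse_injective,
    card_exts (by simp) _]

/-- Reduced words extending `u` by at most `m` further letters. -/
def extsLe (u : List (α × Bool)) (m : ℕ) : Finset (List (α × Bool)) :=
  (Finset.range (m + 1)).biUnion fun t => exts u t

lemma mem_extsLe_iff {u : List (α × Bool)} (hu : u.Chain' RelR) (m : ℕ)
    (l : List (α × Bool)) :
    l ∈ extsLe u m ↔ l.Chain' RelR ∧ u.length ≤ l.length ∧ l.length ≤ u.length + m ∧
      l.take u.length = u := by
  simp only [extsLe, Finset.mem_biUnion, Finset.mem_range]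
  constructor
  · rintro ⟨t, ht, hl⟩
    obtain ⟨h1, h2, h3⟩ := (mem_exts_iff hu t l).mp hl
    exact ⟨h1, by omega, by omega, h3⟩
  · rintro ⟨h1, h2, h3, h4⟩
    exact ⟨l.length - u.length, by omega,
      (mem_exts_iff hu _ l).mpr ⟨h1, by omega, h4⟩⟩

lemma card_extsLe {u : List (α × Bool)} (hu : u ≠ []) (m : ℕ) :
    (extsLe u m).card = ∑ t ∈ Finset.range (m + 1), (2 * Fintype.card α - 1) ^ t := by
  rw [extsLe, Finset.card_biUnion]
  · exact Finset.sum_congr rfl fun t _ => card_exts hu t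
  · intro t ht t' ht' hne
    simp only [Finset.disjoint_left]
    intro l hl hl'
    have := length_of_mem_exts hl
    have := length_of_mem_exts hl'
    omega

/-- Pairs `(x, y)` of reduced words: `x` of length in `[k, p]` whose `k`-th letter is `g`,
and `y` of length in `[k+1, p]` extending `x.take k ++ [h]`. -/
def PF (g h : α × Bool) (k p : ℕ) : Finset (List (α × Bool) × List (α × Bool)) :=
  (Ufin g k).biUnion fun u => (extsLe u (p - k)) ×ˢ (extsLe (u ++ [h]) (p - (k + 1)))

lemma chain'_concat_of_getLast {u : List (α × Bool)} {g h : α × Bool}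
    (hu : u.Chain' RelR) (hlast : u.getLast? = some g) (hgh : RelR g h) :
    (u ++ [h]).Chain' RelR := by
  refine List.isChain_append.mpr ⟨hu, List.isChain_singleton h, ?_⟩
  intro c hc y hy
  simp only [List.head?_cons, Option.mem_some_iff] at hy
  rw [hlast] at hc
  simp only [Option.mem_some_iff] at hc
  subst hy; subst hc
  exact hgh

lemma mem_PF_iff {g h : α × Bool} (hgh : RelR g h) {k p : ℕ} (hk : 1 ≤ k)
    (hp : k + 1 ≤ p) (x y : List (α × Bool)) :
    (x, y) ∈ PF g h k p ↔ x.Chain' RelR ∧ y.Chain' RelR ∧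
      (x.length ≤ p ∧ y.length ≤ p ∧ k ≤ x.length ∧ x[k - 1]? = some g ∧
        k + 1 ≤ y.length ∧ y.take (k + 1) = x.take k ++ [h]) := by
  simp only [PF, Finset.mem_biUnion, Finset.mem_product]
  constructor
  · rintro ⟨u, hu, hx, hy⟩
    obtain ⟨hcu, hlu, hgu⟩ := (mem_Ufin_iff hk u).mp hu
    obtain ⟨hcx, hx1, hx2, hx3⟩ := (mem_extsLe_iff hcu _ x).mp hx
    have hcu' : (u ++ [h]).Chain' RelR := chain'_concat_of_getLast hcu hgu hgh
    obtain ⟨hcy, hy1, hy2, hy3⟩ := (mem_extsLe_iff hcu' _ y).mp hy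
    rw [List.length_append, List.length_singleton, hlu] at hy1 hy2 hy3
    rw [hlu] at hx2 hx3
    refine ⟨hcx, hcy, by omega, by omega, by omega, ?_, by omega, by rw [hy3, hx3]⟩
    rw [← List.getElem?_take_of_lt (l := x) (j := k) (i := k - 1) (by omega), hx3, ← hlu,
      ← List.getLast?_eq_getElem?]
    exact hgu
  · rintro ⟨hcx, hcy, h1, h2, h3, h4, h5, h6⟩
    refine ⟨x.take k, ?_, ?_, ?_⟩
    · refine (mem_Ufin_iff hk _).mpr ⟨List.IsChain.take hcx k, by simp; omega, ?_⟩
      rw [List.getLast?_eq_getElem?, List.length_take, min_eq_left (by omega),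
        List.getElem?_take_of_lt (show k - 1 < k by omega)]
      exact h4
    · exact (mem_extsLe_iff (List.IsChain.take hcx k) _ x).mpr
        ⟨hcx, by simp, by simp; omega, by simp⟩
    · have hcu' : (x.take k ++ [h]).Chain' RelR := by
        rw [← h6]; exact List.IsChain.take hcy _
      refine (mem_extsLe_iff hcu' _ y).mpr ⟨hcy, ?_, ?_, ?_⟩
      · simp; omega
      · simp; omega
      · have : (x.take k ++ [h]).length = k + 1 := by simp; omega
        rw [this, h6]

lemma card_PF {g h : α × Bool} {k p : ℕ} (hk : 1 ≤ k) (hp : k + 1 ≤ p) :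
    (PF g h k p).card = (2 * Fintype.card α - 1) ^ (k - 1) *
      ((∑ t ∈ Finset.range (p - k + 1), (2 * Fintype.card α - 1) ^ t) *
       (∑ t ∈ Finset.range (p - k), (2 * Fintype.card α - 1) ^ t)) := by
  rw [PF, Finset.card_biUnion]
  · have hconst : ∀ u ∈ Ufin g k,
        (extsLe u (p - k) ×ˢ extsLe (u ++ [h]) (p - (k + 1))).card =
          (∑ t ∈ Finset.range (p - k + 1), (2 * Fintype.card α - 1) ^ t) *
            ∑ t ∈ Finset.range (p - k), (2 * Fintype.card α - 1) ^ t := by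
      intro u hu
      obtain ⟨hcu, hlu, hgu⟩ := (mem_Ufin_iff hk u).mp hu
      have hune : u ≠ [] := by intro hn; rw [hn] at hlu; simp at hlu; omega
      rw [Finset.card_product, card_extsLe hune, card_extsLe (by simp)]
      have : p - (k + 1) + 1 = p - k := by omega
      rw [this]
    rw [Finset.sum_congr rfl hconst, Finset.sum_const, smul_eq_mul, card_Ufin]
  · intro u1 h1 u2 h2 hne
    simp only [Finset.disjoint_left, Finset.mem_product]
    rintro ⟨x, y⟩ ⟨hx1, -⟩ ⟨hx2, -⟩
    apply hne
    obtain ⟨hcu1, hlu1, -⟩ := (mem_Ufin_iff hk u1).mp h1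
    obtain ⟨hcu2, hlu2, -⟩ := (mem_Ufin_iff hk u2).mp h2
    obtain ⟨-, -, -, ht1⟩ := (mem_extsLe_iff hcu1 _ x).mp hx1
    obtain ⟨-, -, -, ht2⟩ := (mem_extsLe_iff hcu2 _ x).mp hx2
    rw [hlu1] at ht1
    rw [hlu2] at ht2
    rw [← ht1, ← ht2]

/-- Geometric sum `1 + q + ... + q^t`. -/
def Sgeo (q t : ℕ) : ℕ := ∑ j ∈ Finset.range (t + 1), q ^ j

lemma Sgeo_succ (q t : ℕ) : Sgeo q (t + 1) = q * Sgeo q t + 1 := by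
  rw [Sgeo, Sgeo, geom_sum_succ]

lemma Sgeo_pos (q t : ℕ) : 1 ≤ Sgeo q t := by
  induction t with
  | zero => simp [Sgeo]
  | succ t ih => rw [Sgeo_succ]; omega

lemma Sgeo_mono (q : ℕ) {t t' : ℕ} (h : t ≤ t') : Sgeo q t ≤ Sgeo q t' := by
  apply Finset.sum_le_sum_of_subset
  exact Finset.range_subset_range.mpr (by omega)

lemma key_ineq (q S G : ℕ) (hq : 3 ≤ q) (hS : 1 ≤ S)
    (hG : q * (q + 1) * S + q + 2 ≤ G) :
    S * (q * G + 2) ^ 2 ≤ (q ^ 2 * S + q + 1) * G ^ 2 := by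
  nlinarith [mul_le_mul_of_nonneg_left hG (Nat.zero_le ((q + 1) * G)),
    Nat.one_le_iff_ne_zero.mp (le_trans (by omega) hG),
    mul_pos (Nat.lt_of_lt_of_le (by omega) hG) (Nat.lt_of_lt_of_le (by omega) hG),
    sq_nonneg (q * G), hS, hq]


/-- `Gcard n p` is the number of elements of the rank-`n` free group whose reduced word
has length at most `p` (the cardinality of `G_p`). -/
noncomputable def Gcard (n p : ℕ) : ℕ :=
  {w : FreeGroup (Fin n) | w.toWord.length ≤ p}.ncard

/-- `Scard n k p = |G_p| − |G_{k−1}|` is the number of elements of the rank-`n` free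
group whose reduced word has length between `k` and `p`. -/
noncomputable def Scard (n k p : ℕ) : ℕ := Gcard n p - Gcard n (k - 1)

/-- `Wcard n k = 2n(2n−1)^{k−1}` is the number of elements of the rank-`n` free group
whose reduced word has length exactly `k` (for `k ≥ 1`). -/
def Wcard (n k : ℕ) : ℕ := 2 * n * (2 * n - 1) ^ (k - 1)

lemma Gcard_eq_card_allLe (n p : ℕ) : Gcard n p = (allLe (Fin n) p).card := by
  rw [Gcard]
  exact ncard_toWord_set _ (fun l => l.length ≤ p) (fun l => mem_allLe_iff p l)

lemma Gcard_zero (n : ℕ) : Gcard n 0 = 1 := by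
  rw [Gcard_eq_card_allLe, card_allLe, Finset.sum_range_one]
  simp [exts]

lemma Gcard_closed (n p : ℕ) :
    Gcard n (p + 1) = 1 + 2 * n * Sgeo (2 * n - 1) p := by
  induction p with
  | zero =>
    have e0 : (exts ([] : List (Fin n × Bool)) 0).card = 1 := rfl
    have e1 : (exts ([] : List (Fin n × Bool)) 1).card = 2 * n := by
      rw [card_exts_nil 0]
      simp [Fintype.card_fin]
    rw [Gcard_eq_card_allLe, card_allLe, Finset.sum_range_succ, Finset.sum_range_one, e0, e1]
    simp [Sgeo]
  | succ p ih =>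
    have h1 : (allLe (Fin n) (p + 1 + 1)).card
        = (allLe (Fin n) (p + 1)).card + 2 * n * (2 * n - 1) ^ (p + 1) := by
      rw [card_allLe, card_allLe, Finset.sum_range_succ, card_exts_nil (p + 1)]
      simp [Fintype.card_fin]
    rw [Gcard_eq_card_allLe, h1, ← Gcard_eq_card_allLe, ih]
    rw [show Sgeo (2 * n - 1) (p + 1) = Sgeo (2 * n - 1) p + (2 * n - 1) ^ (p + 1) from
      Finset.sum_range_succ _ _]
    ring

lemma Gcard_succ (n p : ℕ) (hn : 1 ≤ n) :
    Gcard n (p + 1) = (2 * n - 1) * Gcard n p + 2 := by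
  cases p with
  | zero =>
    have h0 : Sgeo (2 * n - 1) 0 = 1 := by simp [Sgeo]
    rw [Gcard_closed, Gcard_zero, h0]
    omega
  | succ p =>
    rw [Gcard_closed, Gcard_closed, Sgeo_succ]
    obtain ⟨q, hq⟩ : ∃ q, 2 * n - 1 = q := ⟨_, rfl⟩
    have h2n : 2 * n = q + 1 := by omega
    rw [hq, h2n]
    ring

lemma Gcard_pos (n p : ℕ) : 1 ≤ Gcard n p := by
  cases p with
  | zero => rw [Gcard_zero]
  | succ p => rw [Gcard_closed]; omega


/-- Fix `n ≥ 2` and `k ≥ 1`. The proportion `a_p` of pairs `(x, y) ∈ G_p × G_p` such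
that the reduced word of `x` has length at least `k` with `k`-th letter `a₁⁻¹`, and the
reduced word of `y` has length at least `k+1` with first `k+1` letters equal to the
first `k` letters of the reduced word of `x` followed by `a₂`, is monotone nondecreasing
in `p`: `a_p ≤ a_{p+1}` for all `p ≥ 1`. -/
theorem proportion_case_one_nondecreasing (n k : ℕ) (hn : 2 ≤ n) (hk : 1 ≤ k)
    (P : ℕ → Set (FreeGroup (Fin n) × FreeGroup (Fin n)))
    (hP : ∀ p : ℕ, P p = {xy | xy.1.toWord.length ≤ p ∧ xy.2.toWord.length ≤ p ∧
      k ≤ xy.1.toWord.length ∧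
      xy.1.toWord[k - 1]? = some (⟨0, by omega⟩, false) ∧
      k + 1 ≤ xy.2.toWord.length ∧
      xy.2.toWord.take (k + 1) = xy.1.toWord.take k ++ [(⟨1, by omega⟩, true)]})
    (a : ℕ → ℝ) (ha : ∀ p : ℕ, a p = ((P p).ncard : ℝ) / ((Gcard n p : ℝ) ^ 2)) :
    ∀ p : ℕ, 1 ≤ p → a p ≤ a (p + 1) := by
  intro p hp
  rcases le_or_gt p k with hpk | hpk
  · -- for `p ≤ k` the set `P p` is empty, so `a p = 0 ≤ a (p+1)`
    have hempty : P p = ∅ := by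
      rw [hP p, Set.eq_empty_iff_forall_notMem]
      rintro ⟨x, y⟩ ⟨h1, h2, h3, h4, h5, h6⟩
      simp only at h2 h5
      omega
    rw [ha p, ha (p + 1), hempty]
    simp only [Set.ncard_empty, Nat.cast_zero, zero_div]
    positivity
  · -- main case : `p ≥ k + 1`
    have hfin : Fintype.card (Fin n) = n := Fintype.card_fin n
    have hgh : RelR ((⟨0, by omega⟩ : Fin n), false) ((⟨1, by omega⟩ : Fin n), true) := by
      simp [RelR, Fin.ext_iff]
    have hPcard : ∀ r, k + 1 ≤ r → (P r).ncard =
        (PF ((⟨0, by omega⟩ : Fin n), false) ((⟨1, by omega⟩ : Fin n), true) k r).card := by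
      intro r hr
      rw [hP r]
      exact ncard_toWord_set2
        (PF ((⟨0, by omega⟩ : Fin n), false) ((⟨1, by omega⟩ : Fin n), true) k r)
        (fun x y => x.length ≤ r ∧ y.length ≤ r ∧ k ≤ x.length ∧
          x[k - 1]? = some ((⟨0, by omega⟩ : Fin n), false) ∧ k + 1 ≤ y.length ∧
          y.take (k + 1) = x.take k ++ [((⟨1, by omega⟩ : Fin n), true)])
        (fun x y => mem_PF_iff hgh hk hr x y)
    obtain ⟨t, ht⟩ : ∃ t, p = k + 1 + t := ⟨p - k - 1, by omega⟩
    have hq3 : 3 ≤ 2 * n - 1 := by omega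
    have hPF1 : (PF ((⟨0, by omega⟩ : Fin n), false) ((⟨1, by omega⟩ : Fin n), true) k p).card
        = (2 * n - 1) ^ (k - 1) * (Sgeo (2 * n - 1) (t + 1) * Sgeo (2 * n - 1) t) := by
      rw [card_PF hk (by omega), hfin,
        show p - k + 1 = t + 1 + 1 from by omega, show p - k = t + 1 from by omega]
      rfl
    have hPF2 : (PF ((⟨0, by omega⟩ : Fin n), false) ((⟨1, by omega⟩ : Fin n), true) k
          (p + 1)).card
        = (2 * n - 1) ^ (k - 1) * (Sgeo (2 * n - 1) (t + 2) * Sgeo (2 * n - 1) (t + 1)) := by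
      rw [card_PF hk (by omega), hfin,
        show p + 1 - k + 1 = t + 2 + 1 from by omega, show p + 1 - k = t + 1 + 1 from by omega]
      rfl
    have hGp : Gcard n p = 1 + 2 * n * Sgeo (2 * n - 1) (k + t) := by
      rw [show p = (k + t) + 1 from by omega, Gcard_closed]
    have hG2 : Gcard n (p + 1) = (2 * n - 1) * Gcard n p + 2 := Gcard_succ n p (by omega)
    have hbound : (2 * n - 1) * ((2 * n - 1) + 1) * Sgeo (2 * n - 1) t + (2 * n - 1) + 2
        ≤ Gcard n p := by
      rw [hGp]
      have hmono : Sgeo (2 * n - 1) (t + 1) ≤ Sgeo (2 * n - 1) (k + t) :=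
        Sgeo_mono _ (by omega)
      rw [Sgeo_succ] at hmono
      generalize hgen : 2 * n - 1 = q at hmono ⊢
      have h2n : 2 * n = q + 1 := by omega
      rw [h2n]
      nlinarith [Nat.mul_le_mul_left (q + 1) hmono]
    have hcore : Sgeo (2 * n - 1) t * (Gcard n (p + 1)) ^ 2
        ≤ Sgeo (2 * n - 1) (t + 2) * (Gcard n p) ^ 2 := by
      rw [hG2, show Sgeo (2 * n - 1) (t + 2)
          = (2 * n - 1) ^ 2 * Sgeo (2 * n - 1) t + (2 * n - 1) + 1 from by
        rw [Sgeo_succ, Sgeo_succ]; ring]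
      exact key_ineq _ _ _ hq3 (Sgeo_pos _ _) hbound
    have hnat : (P p).ncard * (Gcard n (p + 1)) ^ 2
        ≤ (P (p + 1)).ncard * (Gcard n p) ^ 2 := by
      rw [hPcard p (by omega), hPcard (p + 1) (by omega), hPF1, hPF2]
      calc (2 * n - 1) ^ (k - 1) * (Sgeo (2 * n - 1) (t + 1) * Sgeo (2 * n - 1) t) *
            (Gcard n (p + 1)) ^ 2
          = (2 * n - 1) ^ (k - 1) * Sgeo (2 * n - 1) (t + 1) *
            (Sgeo (2 * n - 1) t * (Gcard n (p + 1)) ^ 2) := by ring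
        _ ≤ (2 * n - 1) ^ (k - 1) * Sgeo (2 * n - 1) (t + 1) *
            (Sgeo (2 * n - 1) (t + 2) * (Gcard n p) ^ 2) := Nat.mul_le_mul le_rfl hcore
        _ = (2 * n - 1) ^ (k - 1) * (Sgeo (2 * n - 1) (t + 2) * Sgeo (2 * n - 1) (t + 1)) *
            (Gcard n p) ^ 2 := by ring
    have hg1pos : (0 : ℝ) < ((Gcard n p : ℝ)) ^ 2 := by
      have : (0 : ℝ) < (Gcard n p : ℝ) := by exact_mod_cast Gcard_pos n p
      positivity
    have hg2pos : (0 : ℝ) < ((Gcard n (p + 1) : ℝ)) ^ 2 := by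
      have : (0 : ℝ) < (Gcard n (p + 1) : ℝ) := by exact_mod_cast Gcard_pos n (p + 1)
      positivity
    rw [ha p, ha (p + 1), div_le_div_iff₀ hg1pos hg2pos]
    exact_mod_cast hnat
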